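/- Let K be a field of characteristic p > 0 and b ∈ K. The second-order operator D(f,g) = ∂f·∂g - b·∂²f·g from F_0 ⊗ F_b to F_{b+2} is vect(1;N)-invariant: for all h∂ ∈ vect(1;N), L_{h∂}(D(f,g)) = D(L_{h∂}f, g) + D(f, L_{h∂}g), where the weight is 0 on the first source, b on the second source, and b+2 on the target. -/

import Mathlib

open Finset

/-- Multiplication in the divided power algebra `O(1;N)` truncated at `n = p^N`;
elements are given by their coefficients in the basis `u^{(r)}`, `0 ≤ r < n`,
and `u^{(r)} · u^{(s)} = C(r+s, r) u^{(r+s)}` (zero if `r+s ≥ n`). -/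
def dpMul {K : Type*} [Field K] (n : ℕ) (f g : ℕ → K) : ℕ → K :=
  fun t => if t < n then ∑ i ∈ Finset.range (t + 1), ((t.choose i : K) * f i * g (t - i)) else 0

/-- The distinguished derivation `∂` of `O(1;N)`: `∂(u^{(r)}) = u^{(r-1)}`. -/
def dpDer {K : Type*} [Field K] (n : ℕ) (f : ℕ → K) : ℕ → K :=
  fun r => if r + 1 < n then f (r + 1) else 0

/-- Membership in `O(1;N)`: coefficients vanish in degrees `≥ n`. -/
def dpSupp {K : Type*} [Field K] (n : ℕ) (f : ℕ → K) : Prop := ∀ r, n ≤ r → f r = 0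

/-- Berezin-type integral: the coefficient of `u^{(n-1)}`. -/
def dpInt {K : Type*} [Field K] (n : ℕ) (f : ℕ → K) : K := f (n - 1)

/-- Lie derivative along `h∂ ∈ vect(1;N)` acting on the weighted density module
`F_a`: `L_{h∂}(f) = h·∂f + a·f·∂h`. -/
def dpLie {K : Type*} [Field K] (n : ℕ) (a : K) (h f : ℕ → K) : ℕ → K :=
  dpMul n h (dpDer n f) + a • dpMul n f (dpDer n h)


section raw
variable {K : Type*} [Field K] {n : ℕ}

lemma dpSupp_mul (f g : ℕ → K) : dpSupp n (dpMul n f g) :=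
  fun r hr => if_neg (by omega)

lemma dpSupp_der (f : ℕ → K) : dpSupp n (dpDer n f) :=
  fun r hr => if_neg (by omega)

lemma dpSupp_add {f g : ℕ → K} (hf : dpSupp n f) (hg : dpSupp n g) : dpSupp n (f + g) :=
  fun r hr => by simp [hf r hr, hg r hr]

lemma dpSupp_neg {f : ℕ → K} (hf : dpSupp n f) : dpSupp n (-f) :=
  fun r hr => by simp [hf r hr]

lemma dpSupp_sub {f g : ℕ → K} (hf : dpSupp n f) (hg : dpSupp n g) : dpSupp n (f - g) :=
  fun r hr => by simp [hf r hr, hg r hr]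

lemma dpSupp_smul (c : K) {f : ℕ → K} (hf : dpSupp n f) : dpSupp n (c • f) :=
  fun r hr => by simp [hf r hr]

lemma dpSupp_one (hn : n ≠ 0) : dpSupp n (fun t => if t = 0 then (1:K) else 0) :=
  fun r hr => by
    have : r ≠ 0 := by omega
    simp [this]

lemma dpMul_comm (f g : ℕ → K) : dpMul n f g = dpMul n g f := by
  funext t
  unfold dpMul
  by_cases ht : t < n
  · simp only [if_pos ht]
    rw [← Finset.sum_range_reflect]
    refine Finset.sum_congr rfl fun i hi => ?_
    simp only [Finset.mem_range] at hi
    have h1 : t + 1 - 1 - i = t - i := by omega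
    have h2 : t - (t - i) = i := by omega
    rw [h1, h2, Nat.choose_symm (by omega : i ≤ t)]
    ring
  · simp only [if_neg ht]

lemma dpMul_zero (f : ℕ → K) : dpMul n f 0 = 0 := by
  funext t; unfold dpMul; split <;> simp

lemma zero_dpMul (f : ℕ → K) : dpMul n (0:ℕ → K) f = 0 := by
  rw [dpMul_comm]; exact dpMul_zero f

lemma dpMul_add (f g h : ℕ → K) : dpMul n f (g + h) = dpMul n f g + dpMul n f h := by
  funext t
  simp only [dpMul, Pi.add_apply]
  split
  · rw [← Finset.sum_add_distrib]
    exact Finset.sum_congr rfl fun i _ => by ring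
  · simp

lemma add_dpMul (f g h : ℕ → K) : dpMul n (f + g) h = dpMul n f h + dpMul n g h := by
  rw [dpMul_comm, dpMul_add, dpMul_comm h f, dpMul_comm h g]

lemma dpMul_smul (c : K) (f g : ℕ → K) : dpMul n f (c • g) = c • dpMul n f g := by
  funext t
  simp only [dpMul, Pi.smul_apply, smul_eq_mul]
  split
  · rw [Finset.mul_sum]
    exact Finset.sum_congr rfl fun i _ => by ring
  · simp

lemma smul_dpMul (c : K) (f g : ℕ → K) : dpMul n (c • f) g = c • dpMul n f g := by
  rw [dpMul_comm, dpMul_smul, dpMul_comm]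

lemma dpMul_assoc (f g h : ℕ → K) :
    dpMul n (dpMul n f g) h = dpMul n f (dpMul n g h) := by
  funext t
  by_cases ht : t < n
  · show (if t < n then _ else 0) = (if t < n then _ else 0)
    simp only [if_pos ht]
    have hL : ∑ i ∈ Finset.range (t + 1), ((t.choose i : K) * dpMul n f g i * h (t - i))
        = ∑ i ∈ Finset.range (t + 1), ∑ j ∈ Finset.range (i + 1),
            ((t.choose i : K) * ((i.choose j : K) * f j * g (i - j)) * h (t - i)) := by
      refine Finset.sum_congr rfl fun i hi => ?_
      simp only [Finset.mem_range] at hi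
      have hin : i < n := by omega
      rw [dpMul, if_pos hin, Finset.mul_sum, Finset.sum_mul]
    have hR : ∑ i ∈ Finset.range (t + 1), ((t.choose i : K) * f i * dpMul n g h (t - i))
        = ∑ i ∈ Finset.range (t + 1), ∑ j ∈ Finset.range (t - i + 1),
            ((t.choose i : K) * f i * (((t - i).choose j : K) * g j * h (t - i - j))) := by
      refine Finset.sum_congr rfl fun i hi => ?_
      simp only [Finset.mem_range] at hi
      have hin : t - i < n := by omega
      rw [dpMul, if_pos hin, Finset.mul_sum]
    rw [hL, hR]
    rw [Finset.sum_sigma', Finset.sum_sigma']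
    refine Finset.sum_nbij' (fun x => ⟨x.2, x.1 - x.2⟩) (fun x => ⟨x.1 + x.2, x.1⟩)
      ?_ ?_ ?_ ?_ ?_
    · rintro ⟨i, j⟩ hm
      simp only [Finset.mem_sigma, Finset.mem_range] at hm ⊢
      omega
    · rintro ⟨i, j⟩ hm
      simp only [Finset.mem_sigma, Finset.mem_range] at hm ⊢
      omega
    · rintro ⟨i, j⟩ hm
      simp only [Finset.mem_sigma, Finset.mem_range] at hm
      simp only [Sigma.mk.inj_iff]
      have h1 : j + (i - j) = i := by omega
      exact ⟨h1, HEq.rfl⟩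
    · rintro ⟨i, j⟩ hm
      simp only [Finset.mem_sigma, Finset.mem_range] at hm
      simp only [Sigma.mk.inj_iff]
      have h1 : i + j - i = j := by omega
      exact ⟨trivial, heq_of_eq h1⟩
    · rintro ⟨i, j⟩ hm
      simp only [Finset.mem_sigma, Finset.mem_range] at hm
      obtain ⟨hi, hj⟩ := hm
      have hji : j ≤ i := by omega
      have hit : i ≤ t := by omega
      have key : (t.choose i : K) * (i.choose j : K) = (t.choose j : K) * ((t - j).choose (i - j) : K) := by
        rw [← Nat.cast_mul, ← Nat.cast_mul, Nat.choose_mul (n := t) hji]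
      have harg : t - j - (i - j) = t - i := by omega
      rw [harg]
      calc (t.choose i : K) * ((i.choose j : K) * f j * g (i - j)) * h (t - i)
          = ((t.choose i : K) * (i.choose j : K)) * f j * g (i - j) * h (t - i) := by ring
        _ = ((t.choose j : K) * ((t - j).choose (i - j) : K)) * f j * g (i - j) * h (t - i) := by rw [key]
        _ = (t.choose j : K) * f j * (((t - j).choose (i - j) : K) * g (i - j) * h (t - i)) := by ring
  · show (if t < n then _ else 0) = (if t < n then _ else 0)
    simp only [if_neg ht]
end raw
section leib
variable {K : Type*} [Field K] {n : ℕ}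

lemma dpDer_dpMul (hchar : ∀ k, 0 < k → k < n → ((n.choose k : K)) = 0)
    (f g : ℕ → K) :
    dpDer n (dpMul n f g) = dpMul n (dpDer n f) g + dpMul n f (dpDer n g) := by
  funext r
  show (if r + 1 < n then dpMul n f g (r + 1) else 0)
      = dpMul n (dpDer n f) g r + dpMul n f (dpDer n g) r
  rcases lt_trichotomy (r + 1) n with h1 | h1 | h1
  · -- interior case
    have hr : r < n := by omega
    rw [if_pos h1]
    show (if r + 1 < n then ∑ i ∈ Finset.range (r + 2), (((r+1).choose i : K) * f i * g (r + 1 - i)) else 0)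
      = (if r < n then ∑ i ∈ Finset.range (r + 1), ((r.choose i : K) * dpDer n f i * g (r - i)) else 0)
        + (if r < n then ∑ i ∈ Finset.range (r + 1), ((r.choose i : K) * f i * dpDer n g (r - i)) else 0)
    rw [if_pos h1, if_pos hr, if_pos hr]
    have e1 : ∑ i ∈ Finset.range (r + 1), ((r.choose i : K) * dpDer n f i * g (r - i))
        = ∑ i ∈ Finset.range (r + 1), ((r.choose i : K) * f (i + 1) * g (r - i)) := by
      refine Finset.sum_congr rfl fun i hi => ?_
      simp only [Finset.mem_range] at hi
      rw [dpDer, if_pos (by omega : i + 1 < n)]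
    have e2 : ∑ i ∈ Finset.range (r + 1), ((r.choose i : K) * f i * dpDer n g (r - i))
        = ∑ i ∈ Finset.range (r + 1), ((r.choose i : K) * f i * g (r + 1 - i)) := by
      refine Finset.sum_congr rfl fun i hi => ?_
      simp only [Finset.mem_range] at hi
      rw [dpDer, if_pos (by omega : r - i + 1 < n)]
      have harg : r - i + 1 = r + 1 - i := by omega
      rw [harg]
    rw [e1, e2]
    -- Pascal computation
    rw [Finset.sum_range_succ' (fun i => (((r+1).choose i : K) * f i * g (r + 1 - i))) (r + 1)]
    simp only [Nat.choose_succ_succ, Nat.cast_add, Nat.choose_zero_right, Nat.cast_one, one_mul,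
      Nat.sub_zero]
    have e3 : ∑ i ∈ Finset.range (r + 1), ((((r.choose i : K)) + ((r.choose (i+1) : K))) * f (i + 1) * g (r + 1 - (i + 1)))
        = ∑ i ∈ Finset.range (r + 1), ((r.choose i : K) * f (i + 1) * g (r - i))
          + ∑ i ∈ Finset.range (r + 1), ((r.choose (i+1) : K) * f (i + 1) * g (r - i)) := by
      rw [← Finset.sum_add_distrib]
      refine Finset.sum_congr rfl fun i hi => ?_
      have : r + 1 - (i + 1) = r - i := by omega
      rw [this]; ring
    rw [e3]
    have e4 : ∑ i ∈ Finset.range (r + 1), ((r.choose (i+1) : K) * f (i + 1) * g (r - i)) + f 0 * g (r + 1)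
        = ∑ i ∈ Finset.range (r + 1), ((r.choose i : K) * f i * g (r + 1 - i)) := by
      rw [Finset.sum_range_succ (fun i => ((r.choose (i+1) : K) * f (i + 1) * g (r - i))) r]
      rw [Nat.choose_succ_self, Nat.cast_zero, zero_mul, zero_mul, add_zero]
      rw [Finset.sum_range_succ' (fun i => ((r.choose i : K) * f i * g (r + 1 - i))) r]
      simp only [Nat.choose_zero_right, Nat.cast_one, one_mul, Nat.sub_zero]
      congr 1
      refine Finset.sum_congr rfl fun i hi => ?_
      have harg : r + 1 - (i + 1) = r - i := by omega
      rw [harg]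
    rw [add_assoc, e4]
  · -- boundary case r + 1 = n
    have hr : r < n := by omega
    rw [if_neg (by omega)]
    show 0 = (if r < n then ∑ i ∈ Finset.range (r + 1), ((r.choose i : K) * dpDer n f i * g (r - i)) else 0)
        + (if r < n then ∑ i ∈ Finset.range (r + 1), ((r.choose i : K) * f i * dpDer n g (r - i)) else 0)
    rw [if_pos hr, if_pos hr]
    have e1 : ∑ i ∈ Finset.range (r + 1), ((r.choose i : K) * dpDer n f i * g (r - i))
        = ∑ i ∈ Finset.range r, ((r.choose i : K) * f (i + 1) * g (r - i)) := by
      rw [Finset.sum_range_succ]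
      rw [dpDer, if_neg (by omega : ¬ (r + 1 < n)), mul_zero, zero_mul, add_zero]
      refine Finset.sum_congr rfl fun i hi => ?_
      simp only [Finset.mem_range] at hi
      rw [dpDer, if_pos (by omega : i + 1 < n)]
    have e2 : ∑ i ∈ Finset.range (r + 1), ((r.choose i : K) * f i * dpDer n g (r - i))
        = ∑ i ∈ Finset.range r, ((r.choose (i+1) : K) * f (i + 1) * g (r - i)) := by
      rw [Finset.sum_range_succ' (fun i => ((r.choose i : K) * f i * dpDer n g (r - i))) r]
      rw [dpDer, if_neg (by omega : ¬ (r - 0 + 1 < n)), mul_zero, add_zero]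
      refine Finset.sum_congr rfl fun i hi => ?_
      simp only [Finset.mem_range] at hi
      rw [dpDer, if_pos (by omega : r - (i + 1) + 1 < n)]
      have harg : r - (i + 1) + 1 = r - i := by omega
      rw [harg]
    rw [e1, e2, ← Finset.sum_add_distrib]
    symm
    refine Finset.sum_eq_zero fun i hi => ?_
    simp only [Finset.mem_range] at hi
    have : ((r.choose i : K)) + ((r.choose (i+1) : K)) = ((r+1).choose (i+1) : K) := by
      rw [Nat.choose_succ_succ, Nat.cast_add]
    have hz : (((r+1).choose (i+1) : K)) = 0 := by
      have := hchar (i + 1) (by omega) (by omega)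
      rwa [← h1] at this
    calc (r.choose i : K) * f (i + 1) * g (r - i) + (r.choose (i+1) : K) * f (i + 1) * g (r - i)
        = (((r.choose i : K)) + ((r.choose (i+1) : K))) * f (i + 1) * g (r - i) := by ring
      _ = 0 := by rw [this, hz, zero_mul, zero_mul]
  · -- r ≥ n
    rw [if_neg (by omega)]
    show 0 = (if r < n then _ else 0) + (if r < n then _ else 0)
    rw [if_neg (by omega), if_neg (by omega), add_zero]
end leib
section rawone
variable {K : Type*} [Field K] {n : ℕ}

lemma dpOne_mul {x : ℕ → K} (hx : dpSupp n x) :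
    dpMul n (fun t => if t = 0 then (1:K) else 0) x = x := by
  funext t
  by_cases ht : t < n
  · rw [dpMul, if_pos ht]
    have e : ∀ i ∈ Finset.range (t + 1),
        ((t.choose i : K) * (if i = 0 then (1:K) else 0) * x (t - i))
          = if i = 0 then x t else 0 := by
      intro i _
      by_cases hi : i = 0
      · subst hi; simp
      · simp [hi]
    rw [Finset.sum_congr rfl e, Finset.sum_ite_eq' (Finset.range (t + 1)) 0 (fun _ => x t)]
    simp
  · rw [dpMul, if_neg ht]
    exact (hx t (by omega)).symm

end rawone

/-- The divided power algebra `O(1;N)` as a type: functions supported in degrees `< n`. -/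
def DP (K : Type*) [Field K] (n : ℕ) : Type _ := {x : ℕ → K // dpSupp n x}

namespace DP
variable {K : Type*} [Field K] {n : ℕ} [NeZero n]

instance : CommRing (DP K n) where
  add x y := ⟨x.1 + y.1, dpSupp_add x.2 y.2⟩
  zero := ⟨0, fun _ _ => rfl⟩
  neg x := ⟨-x.1, dpSupp_neg x.2⟩
  sub x y := ⟨x.1 - y.1, dpSupp_sub x.2 y.2⟩
  mul x y := ⟨dpMul n x.1 y.1, dpSupp_mul x.1 y.1⟩
  one := ⟨fun t => if t = 0 then (1:K) else 0, dpSupp_one (NeZero.ne n)⟩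
  add_assoc x y z := Subtype.ext (add_assoc x.1 y.1 z.1)
  zero_add x := Subtype.ext (zero_add x.1)
  add_zero x := Subtype.ext (add_zero x.1)
  add_comm x y := Subtype.ext (add_comm x.1 y.1)
  neg_add_cancel x := Subtype.ext (neg_add_cancel x.1)
  sub_eq_add_neg x y := Subtype.ext (sub_eq_add_neg x.1 y.1)
  mul_assoc x y z := Subtype.ext (dpMul_assoc x.1 y.1 z.1)
  mul_comm x y := Subtype.ext (dpMul_comm x.1 y.1)
  left_distrib x y z := Subtype.ext (dpMul_add x.1 y.1 z.1)
  right_distrib x y z := Subtype.ext (add_dpMul x.1 y.1 z.1)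
  zero_mul x := Subtype.ext (zero_dpMul x.1)
  mul_zero x := Subtype.ext (dpMul_zero x.1)
  one_mul x := Subtype.ext (dpOne_mul x.2)
  mul_one x := Subtype.ext ((dpMul_comm x.1 _).trans (dpOne_mul x.2))
  nsmul m x := ⟨(m : K) • x.1, dpSupp_smul _ x.2⟩
  nsmul_zero x := Subtype.ext (by show ((0:ℕ):K) • x.1 = 0; simp)
  nsmul_succ m x := Subtype.ext (by
    show ((m+1 : ℕ):K) • x.1 = (m : K) • x.1 + x.1
    push_cast
    rw [add_smul, one_smul])
  zsmul m x := ⟨(m : K) • x.1, dpSupp_smul _ x.2⟩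
  zsmul_zero' x := Subtype.ext (by show ((0:ℤ):K) • x.1 = 0; simp)
  zsmul_succ' m x := Subtype.ext (by
    show ((m+1 : ℤ):K) • x.1 = ((m : ℤ) : K) • x.1 + x.1
    push_cast
    rw [add_smul, one_smul])
  zsmul_neg' m x := Subtype.ext (by
    show ((Int.negSucc m : ℤ):K) • x.1 = -(((m.succ : ℤ) : K) • x.1)
    rw [Int.negSucc_eq]
    push_cast
    rw [neg_smul])

instance : SMul K (DP K n) := ⟨fun c x => ⟨c • x.1, dpSupp_smul c x.2⟩⟩

@[simp] lemma val_mul (x y : DP K n) : (x * y).1 = dpMul n x.1 y.1 := rfl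
@[simp] lemma val_add (x y : DP K n) : (x + y).1 = x.1 + y.1 := rfl
@[simp] lemma val_sub (x y : DP K n) : (x - y).1 = x.1 - y.1 := rfl
@[simp] lemma val_smul (c : K) (x : DP K n) : (c • x).1 = c • x.1 := rfl

/-- `∂` on `DP`. -/
def dA (x : DP K n) : DP K n := ⟨dpDer n x.1, dpSupp_der x.1⟩

@[simp] lemma val_dA (x : DP K n) : (dA x).1 = dpDer n x.1 := rfl

lemma dA_add (x y : DP K n) : dA (x + y) = dA x + dA y := by
  refine Subtype.ext ?_
  funext r
  show dpDer n (x.1 + y.1) r = dpDer n x.1 r + dpDer n y.1 r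
  unfold dpDer
  split <;> simp

lemma dA_sub (x y : DP K n) : dA (x - y) = dA x - dA y := by
  refine Subtype.ext ?_
  funext r
  show dpDer n (x.1 - y.1) r = dpDer n x.1 r - dpDer n y.1 r
  unfold dpDer
  split <;> simp

/-- scalars as elements -/
def cA (c : K) : DP K n := c • (1 : DP K n)

lemma smul_mul (c : K) (x y : DP K n) : (c • x) * y = c • (x * y) :=
  Subtype.ext (smul_dpMul c x.1 y.1)

lemma smul_eq_cA_mul (c : K) (x : DP K n) : c • x = cA c * x := by
  rw [cA, smul_mul, one_mul]

lemma dA_cA (c : K) : dA (cA c : DP K n) = 0 := by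
  refine Subtype.ext ?_
  funext r
  show dpDer n (c • (1:DP K n).1) r = (0 : ℕ → K) r
  rw [dpDer]
  split
  · show c * (if r + 1 = 0 then (1:K) else 0) = 0
    rw [if_neg (by omega)]
    simp
  · rfl

lemma cA_add (c d : K) : (cA (c + d) : DP K n) = cA c + cA d :=
  Subtype.ext (add_smul c d (1 : DP K n).1)

lemma cA_zero : (cA (0:K) : DP K n) = 0 :=
  Subtype.ext (zero_smul K (1 : DP K n).1)

lemma cA_two : (cA (2:K) : DP K n) = 1 + 1 := by
  refine Subtype.ext ?_
  funext t
  show (2:K) * (if t = 0 then (1:K) else 0) = (if t = 0 then (1:K) else 0) + (if t = 0 then (1:K) else 0)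
  ring

lemma master (hd : ∀ x y : DP K n, dA (x * y) = dA x * y + x * dA y)
    (b : K) (H F G : DP K n) :
    (H * dA (dA F * dA G - b • (dA (dA F) * G))
      + (b + 2) • ((dA F * dA G - b • (dA (dA F) * G)) * dA H))
    = ((dA (H * dA F + (0:K) • (F * dA H)) * dA G
         - b • (dA (dA (H * dA F + (0:K) • (F * dA H))) * G))
      + (dA F * dA (H * dA G + b • (G * dA H))
         - b • (dA (dA F) * (H * dA G + b • (G * dA H))))) := by
  simp only [smul_eq_cA_mul, cA_add, cA_two, cA_zero]
  simp only [hd, dA_add, dA_sub, dA_cA, zero_mul, mul_zero, zero_add, add_zero]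
  ring

end DP

/-- The second-order operator D(f,g) = ∂f·∂g - b·∂²f·g : F_0 ⊗ F_b → F_{b+2}
is vect(1;N)-invariant. -/
theorem order2_invariant {K : Type*} [Field K] (p N : ℕ) (hp : p.Prime)
    (hN : 1 ≤ N) [CharP K p] (b : K) (h f g : ℕ → K)
    (hh : dpSupp (p ^ N) h) (hf : dpSupp (p ^ N) f) (hg : dpSupp (p ^ N) g) :
    dpLie (p ^ N) (b + 2) h
        (dpMul (p ^ N) (dpDer (p ^ N) f) (dpDer (p ^ N) g)
          - b • dpMul (p ^ N) (dpDer (p ^ N) (dpDer (p ^ N) f)) g)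
      = (dpMul (p ^ N) (dpDer (p ^ N) (dpLie (p ^ N) 0 h f)) (dpDer (p ^ N) g)
          - b • dpMul (p ^ N) (dpDer (p ^ N) (dpDer (p ^ N) (dpLie (p ^ N) 0 h f))) g)
        + (dpMul (p ^ N) (dpDer (p ^ N) f) (dpDer (p ^ N) (dpLie (p ^ N) b h g))
          - b • dpMul (p ^ N) (dpDer (p ^ N) (dpDer (p ^ N) f)) (dpLie (p ^ N) b h g)) := by
  have hn0 : p ^ N ≠ 0 := pow_ne_zero _ hp.pos.ne'
  haveI : NeZero (p ^ N) := ⟨hn0⟩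
  have hchar : ∀ k, 0 < k → k < p ^ N → (((p ^ N).choose k : K)) = 0 := by
    intro k hk hkn
    have hdvd : p ∣ (p ^ N).choose k := hp.dvd_choose_pow (by omega) (by omega)
    exact (CharP.cast_eq_zero_iff K p _).2 hdvd
  have hd : ∀ x y : DP K (p ^ N), DP.dA (x * y) = DP.dA x * y + x * DP.dA y :=
    fun x y => Subtype.ext (dpDer_dpMul hchar x.1 y.1)
  have key := DP.master hd b ⟨h, hh⟩ ⟨f, hf⟩ ⟨g, hg⟩
  have key' := congrArg Subtype.val key
  simp only [DP.val_add, DP.val_sub, DP.val_mul, DP.val_smul, DP.val_dA] at key'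
  exact key'
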